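/- Let P ⊆ ℝ², let G, W ⊆ P be finite sets such that conv(AGP(G,W)) is full-dimensional, and let w ∈ W. Then the witness-induced inequality ∑_{g ∈ V(w) ∩ G} x_g ≥ 1 is a facet of conv(AGP(G,W)) if and only if both of the following hold: (1) there is no witness w' ∈ W with V(w') ∩ G ⊊ V(w) ∩ G; and (2) for every guard g ∈ G \ V(w) there exists a guard g' ∈ V(w) ∩ G that sees every witness in the set {w' ∈ V(g) ∩ W : ḡ ∉ V(w') for all ḡ ∈ G \ (V(w) ∪ {g})}. -/
import Mathlib


open scoped Classical

/-- Points of the Euclidean plane. -/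
abbrev Pt := EuclideanSpace ℝ (Fin 2)

/-- Visibility region of `p` in `P`. -/
def Vis (P : Set Pt) (p : Pt) : Set Pt := {q ∈ P | segment ℝ p q ⊆ P}

/-- Feasible binary solutions of `AGP(G,W)`. -/
def Feasible (P : Set Pt) (G W : Finset Pt) : Set (↥G → ℝ) :=
  {x | (∀ g, x g = 0 ∨ x g = 1) ∧
    ∀ w ∈ W, ∃ g : ↥G, (g : Pt) ∈ Vis P w ∧ x g = 1}

/-- `a ⬝ x ≥ b` is a facet of `conv F ⊆ ℝ^G`: it is valid for all feasible solutions,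
and the face where it holds with equality has affine dimension `|G| - 1`. -/
def IsFacet (G : Finset Pt) (F : Set (↥G → ℝ)) (a : ↥G → ℝ) (b : ℝ) : Prop :=
  (∀ x ∈ F, b ≤ ∑ g : ↥G, a g * x g) ∧
  Module.finrank ℝ
      (affineSpan ℝ {x | x ∈ convexHull ℝ F ∧ ∑ g : ↥G, a g * x g = b}).direction
    = G.card - 1

/- ====== auxiliary ====== -/

lemma vis_symm {P : Set Pt} {p q : Pt} (h : q ∈ Vis P p) : p ∈ Vis P q :=
  ⟨h.2 (left_mem_segment ℝ p q), by rw [segment_symm]; exact h.2⟩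

noncomputable def ef (G : Finset Pt) (g : ↥G) : ↥G → ℝ := fun h => if h = g then 1 else 0

noncomputable def lfun (G : Finset Pt) (c : ↥G → ℝ) : (↥G → ℝ) →ₗ[ℝ] ℝ where
  toFun x := ∑ g, c g * x g
  map_add' x y := by simp [mul_add, Finset.sum_add_distrib]
  map_smul' r x := by
    simp only [Pi.smul_apply, smul_eq_mul, RingHom.id_apply, Finset.mul_sum]
    exact Finset.sum_congr rfl fun g _ => by ring

lemma lfun_apply {G : Finset Pt} (c x : ↥G → ℝ) : lfun G c x = ∑ g, c g * x g := rfl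

lemma sum_ef_mul {G : Finset Pt} (g : ↥G) (x : ↥G → ℝ) :
    ∑ h, ef G g h * x h = x g := by
  have h1 : ∀ h : ↥G, ef G g h * x h = if h = g then x h else 0 := by
    intro h; by_cases hh : h = g <;> simp [ef, hh]
  rw [Finset.sum_congr rfl fun h _ => h1 h, Finset.sum_ite_eq' Finset.univ g x]
  simp

lemma lfun_ef {G : Finset Pt} (c : ↥G → ℝ) (g : ↥G) : lfun G c (ef G g) = c g := by
  rw [lfun_apply]
  have h1 : ∀ h : ↥G, c h * ef G g h = if h = g then c h else 0 := by
    intro h; by_cases hh : h = g <;> simp [ef, hh]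
  rw [Finset.sum_congr rfl fun h _ => h1 h, Finset.sum_ite_eq' Finset.univ g c]
  simp

lemma hull_ge {G : Finset Pt} {F : Set (↥G → ℝ)} {c : ↥G → ℝ} {b : ℝ}
    (h : ∀ x ∈ F, b ≤ ∑ g, c g * x g) :
    ∀ x ∈ convexHull ℝ F, b ≤ ∑ g, c g * x g := fun x hx =>
  convexHull_min (t := {x | b ≤ lfun G c x}) h (convex_halfSpace_ge (lfun G c).isLinear b) hx

lemma hull_le {G : Finset Pt} {F : Set (↥G → ℝ)} {c : ↥G → ℝ} {b : ℝ}
    (h : ∀ x ∈ F, ∑ g, c g * x g ≤ b) :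
    ∀ x ∈ convexHull ℝ F, ∑ g, c g * x g ≤ b := fun x hx =>
  convexHull_min (t := {x | lfun G c x ≤ b}) h (convex_halfSpace_le (lfun G c).isLinear b) hx

lemma hull_coord_nonneg {P : Set Pt} {G W : Finset Pt} (g : ↥G) :
    ∀ x ∈ convexHull ℝ (Feasible P G W), 0 ≤ x g := by
  intro x hx
  have h := hull_ge (F := Feasible P G W) (c := ef G g) (b := 0)
    (fun y hy => by rw [sum_ef_mul]; rcases hy.1 g with h | h <;> rw [h] <;> norm_num) x hx
  rwa [sum_ef_mul] at h

lemma hull_coord_le_one {P : Set Pt} {G W : Finset Pt} (g : ↥G) :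
    ∀ x ∈ convexHull ℝ (Feasible P G W), x g ≤ 1 := by
  intro x hx
  have h := hull_le (F := Feasible P G W) (c := ef G g) (b := 1)
    (fun y hy => by rw [sum_ef_mul]; rcases hy.1 g with h | h <;> rw [h] <;> norm_num) x hx
  rwa [sum_ef_mul] at h

/- ====== the two special feasible points ====== -/

noncomputable def pA (P : Set Pt) (G : Finset Pt) (w : Pt) (g' : ↥G) : ↥G → ℝ :=
  fun h => if (h = g' ∨ (h : Pt) ∉ Vis P w) then 1 else 0

noncomputable def pB (P : Set Pt) (G : Finset Pt) (w : Pt) (g s : ↥G) : ↥G → ℝ :=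
  fun h => if (h = s ∨ ((h : Pt) ∉ Vis P w ∧ h ≠ g)) then 1 else 0

section Points
variable {P : Set Pt} {G W : Finset Pt} {w : Pt}

lemma pA_feasible (cond1 : ¬ ∃ w' ∈ W, Vis P w' ∩ ↑G ⊂ Vis P w ∩ ↑G)
    {g' : ↥G} (hg' : (g' : Pt) ∈ Vis P w) : pA P G w g' ∈ Feasible P G W := by
  constructor
  · intro h; unfold pA; split_ifs <;> simp
  · intro w'' hw''
    by_cases hc : ∃ h : ↥G, (h : Pt) ∈ Vis P w'' ∧ (h : Pt) ∉ Vis P w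
    · obtain ⟨h, h1, h2⟩ := hc
      exact ⟨h, h1, by simp [pA, h2]⟩
    · push_neg at hc
      have hsub : Vis P w'' ∩ ↑G ⊆ Vis P w ∩ ↑G := by
        rintro p ⟨hp1, hp2⟩
        exact ⟨hc ⟨p, hp2⟩ hp1, hp2⟩
      have heq : Vis P w'' ∩ ↑G = Vis P w ∩ ↑G := by
        by_contra hne
        exact cond1 ⟨w'', hw'', ssubset_iff_subset_ne.mpr ⟨hsub, hne⟩⟩
      have hmem : (g' : Pt) ∈ Vis P w'' := by
        have h2 : (g' : Pt) ∈ Vis P w'' ∩ ↑G := by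
          rw [heq]; exact ⟨hg', by simp⟩
        exact h2.1
      exact ⟨g', hmem, by simp [pA]⟩

lemma pB_feasible (cond1 : ¬ ∃ w' ∈ W, Vis P w' ∩ ↑G ⊂ Vis P w ∩ ↑G)
    {g s : ↥G} (hg : (g : Pt) ∉ Vis P w) (hs : (s : Pt) ∈ Vis P w)
    (hprop : ∀ w' ∈ W, w' ∈ Vis P (g : Pt) →
      (∀ gbar ∈ G, gbar ∉ Vis P w → gbar ≠ (g : Pt) → gbar ∉ Vis P w') →
      w' ∈ Vis P (s : Pt)) :
    pB P G w g s ∈ Feasible P G W := by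
  constructor
  · intro h; unfold pB; split_ifs <;> simp
  · intro w'' hw''
    by_cases hc : ∃ h : ↥G, (h : Pt) ∈ Vis P w'' ∧ (h : Pt) ∉ Vis P w ∧ h ≠ g
    · obtain ⟨h, h1, h2, h3⟩ := hc
      exact ⟨h, h1, by simp [pB, h2, h3]⟩
    · push_neg at hc
      by_cases hcg : (g : Pt) ∈ Vis P w''
      · have hbar : ∀ gbar ∈ G, gbar ∉ Vis P w → gbar ≠ (g : Pt) → gbar ∉ Vis P w'' := by
          intro gb hgb h1 h2 hmem
          have := hc ⟨gb, hgb⟩ hmem h1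
          exact h2 (congrArg Subtype.val this)
        have h3 := hprop w'' hw'' (vis_symm hcg) hbar
        exact ⟨s, vis_symm h3, by simp [pB]⟩
      · have hsub : Vis P w'' ∩ ↑G ⊆ Vis P w ∩ ↑G := by
          rintro p ⟨hp1, hp2⟩
          refine ⟨?_, hp2⟩
          by_contra hpw
          have h4 := hc ⟨p, hp2⟩ hp1 hpw
          apply hcg
          have : p = (g : Pt) := congrArg Subtype.val h4
          rwa [this] at hp1
        have heq : Vis P w'' ∩ ↑G = Vis P w ∩ ↑G := by
          by_contra hne
          exact cond1 ⟨w'', hw'', ssubset_iff_subset_ne.mpr ⟨hsub, hne⟩⟩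
        have hmem : (s : Pt) ∈ Vis P w'' := by
          have h2 : (s : Pt) ∈ Vis P w'' ∩ ↑G := by
            rw [heq]; exact ⟨hs, by simp⟩
          exact h2.1
        exact ⟨s, hmem, by simp [pB]⟩

lemma sum_pA {g' : ↥G} (hg' : (g' : Pt) ∈ Vis P w) :
    ∑ h : ↥G, (if (h : Pt) ∈ Vis P w then (1:ℝ) else 0) * pA P G w g' h = 1 := by
  have h1 : ∀ h : ↥G, (if (h : Pt) ∈ Vis P w then (1:ℝ) else 0) * pA P G w g' h
      = if h = g' then 1 else 0 := by
    intro h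
    by_cases e1 : h = g'
    · subst e1; simp [pA, hg']
    · by_cases e2 : (h : Pt) ∈ Vis P w <;> simp [pA, e1, e2]
  rw [Finset.sum_congr rfl fun h _ => h1 h,
    Finset.sum_ite_eq' Finset.univ g' (fun _ => (1:ℝ))]
  simp

lemma sum_pB {g s : ↥G} (hg : (g : Pt) ∉ Vis P w) (hs : (s : Pt) ∈ Vis P w) :
    ∑ h : ↥G, (if (h : Pt) ∈ Vis P w then (1:ℝ) else 0) * pB P G w g s h = 1 := by
  have h1 : ∀ h : ↥G, (if (h : Pt) ∈ Vis P w then (1:ℝ) else 0) * pB P G w g s h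
      = if h = s then 1 else 0 := by
    intro h
    by_cases e1 : h = s
    · subst e1; simp [pB, hs]
    · by_cases e2 : (h : Pt) ∈ Vis P w <;> simp [pB, e1, e2]
  rw [Finset.sum_congr rfl fun h _ => h1 h,
    Finset.sum_ite_eq' Finset.univ s (fun _ => (1:ℝ))]
  simp

lemma pA_sub_pA {g' g0 : ↥G} (hg' : (g' : Pt) ∈ Vis P w) (hg0 : (g0 : Pt) ∈ Vis P w) :
    pA P G w g' - pA P G w g0 = ef G g' - ef G g0 := by
  funext h
  simp only [Pi.sub_apply, pA, ef]
  by_cases e1 : h = g'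
  · subst e1
    by_cases e2 : h = g0
    · simp [e2]
    · simp [e2, hg']
  · by_cases e2 : h = g0
    · subst e2; simp [e1, hg0]
    · by_cases e3 : (h : Pt) ∈ Vis P w <;> simp [e1, e2, e3]

lemma pA_sub_pB {g s : ↥G} (hg : (g : Pt) ∉ Vis P w) (hs : (s : Pt) ∈ Vis P w) :
    pA P G w s - pB P G w g s = ef G g := by
  funext h
  simp only [Pi.sub_apply, pA, pB, ef]
  by_cases e1 : h = g
  · subst e1
    have e2 : h ≠ s := by intro he; rw [he] at hg; exact hg hs
    simp [e2, hg]
  · by_cases e2 : h = s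
    · have e4 : s ≠ g := by intro he; rw [he] at hs; exact hg hs
      simp [e2, e4]
    · by_cases e3 : (h : Pt) ∈ Vis P w <;> simp [e1, e2, e3]

end Points

lemma finrank_ker_two {G : Finset Pt} (f : (↥G → ℝ) →ₗ[ℝ] ℝ × ℝ)
    (hsurj : Function.Surjective f) :
    Module.finrank ℝ (LinearMap.ker f) = G.card - 2 := by
  have h := LinearMap.finrank_range_add_finrank_ker f
  rw [LinearMap.range_eq_top.mpr hsurj, finrank_top, Module.finrank_prod,
    Module.finrank_self, Module.finrank_fintype_fun_eq_card, Fintype.card_coe] at h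
  omega

lemma finrank_ker_one {G : Finset Pt} (f : (↥G → ℝ) →ₗ[ℝ] ℝ)
    (hsurj : Function.Surjective f) :
    Module.finrank ℝ (LinearMap.ker f) = G.card - 1 := by
  have h := LinearMap.finrank_range_add_finrank_ker f
  rw [LinearMap.range_eq_top.mpr hsurj, finrank_top,
    Module.finrank_self, Module.finrank_fintype_fun_eq_card, Fintype.card_coe] at h
  omega

/-- The face of the witness inequality for `w`. -/
def faceSet (P : Set Pt) (G W : Finset Pt) (w : Pt) : Set (↥G → ℝ) :=
  {x | x ∈ convexHull ℝ (Feasible P G W) ∧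
    ∑ g : ↥G, (if (g : Pt) ∈ Vis P w then (1:ℝ) else 0) * x g = 1}

lemma face_dim_contra {P : Set Pt} {G W : Finset Pt} {w : Pt}
    (hdim : Module.finrank ℝ (affineSpan ℝ (faceSet P G W w)).direction = G.card - 1)
    (g0 g1 : ↥G) (hne : g1 ≠ g0) (hg1 : (g1 : Pt) ∈ Vis P w) (r : ℝ)
    (hS : ∀ x ∈ faceSet P G W w, x g0 = r) : False := by
  classical
  set A : ↥G → ℝ := fun g => if (g : Pt) ∈ Vis P w then (1:ℝ) else 0 with hA
  set φ : (↥G → ℝ) →ₗ[ℝ] ℝ × ℝ := (lfun G A).prod (LinearMap.proj g0) with hφ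
  have hφx : ∀ x : ↥G → ℝ, φ x = (∑ g : ↥G, A g * x g, x g0) := by
    intro x; rfl
  have hsub : vectorSpan ℝ (faceSet P G W w) ≤ LinearMap.ker φ := by
    rw [vectorSpan_def, Submodule.span_le]
    intro v hv
    rw [Set.mem_vsub] at hv
    obtain ⟨x, hx, y, hy, rfl⟩ := hv
    rw [SetLike.mem_coe, LinearMap.mem_ker, vsub_eq_sub, map_sub]
    have h1 : φ x = (1, r) := by rw [hφx, hx.2, hS x hx]
    have h2 : φ y = (1, r) := by rw [hφx, hy.2, hS y hy]
    rw [h1, h2, sub_self]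
  have hsurj : Function.Surjective φ := by
    rintro ⟨u, v⟩
    refine ⟨v • ef G g0 + (u - v * A g0) • ef G g1, ?_⟩
    have h0 : φ (ef G g0) = (A g0, 1) := by
      rw [hφx]
      have : ef G g0 g0 = 1 := by simp [ef]
      rw [this]
      congr 1
      have := lfun_ef (G := G) A g0
      rw [lfun_apply] at this
      exact this
    have h1 : φ (ef G g1) = (1, 0) := by
      rw [hφx]
      have e1 : ef G g1 g0 = 0 := by simp [ef, hne.symm]
      rw [e1]
      congr 1
      have := lfun_ef (G := G) A g1
      rw [lfun_apply] at this
      rw [this, hA]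
      simp [hg1]
    rw [map_add, map_smul, map_smul, h0, h1, Prod.smul_mk, Prod.smul_mk, Prod.mk_add_mk]
    simp only [smul_eq_mul]
    congr 1 <;> ring
  have h2 := finrank_ker_two φ hsurj
  have h3 : Module.finrank ℝ ((vectorSpan ℝ (faceSet P G W w)) : Submodule ℝ (↥G → ℝ))
      ≤ G.card - 2 := h2 ▸ Submodule.finrank_mono hsub
  rw [direction_affineSpan] at hdim
  have hcard : 2 ≤ G.card := by
    exact Finset.one_lt_card.mpr ⟨(g1:Pt), g1.2, (g0:Pt), g0.2, fun h => hne (Subtype.ext h)⟩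
  omega


/-- If `conv(AGP(G,W))` is full-dimensional and `w ∈ W`, then the
witness-induced inequality `∑_{g ∈ V(w) ∩ G} x_g ≥ 1` is a facet of `conv(AGP(G,W))`
iff (1) no witness `w' ∈ W` satisfies `V(w') ∩ G ⊊ V(w) ∩ G`, and (2) for every guard
`g ∈ G \ V(w)` there is a guard `g' ∈ V(w) ∩ G` seeing every witness in
`{w' ∈ V(g) ∩ W : ḡ ∉ V(w') for all ḡ ∈ G \ (V(w) ∪ {g})}`. -/
theorem witness_facet_iff (P : Set Pt) (G W : Finset Pt) (hG : ↑G ⊆ P) (hW : ↑W ⊆ P)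
    (hfull : affineSpan ℝ (convexHull ℝ (Feasible P G W)) = ⊤)
    (w : Pt) (hw : w ∈ W) :
    IsFacet G (Feasible P G W) (fun g => if (g : Pt) ∈ Vis P w then 1 else 0) 1 ↔
      ((¬ ∃ w' ∈ W, Vis P w' ∩ ↑G ⊂ Vis P w ∩ ↑G) ∧
       (∀ g ∈ G, g ∉ Vis P w →
          ∃ g' ∈ G, g' ∈ Vis P w ∧
            ∀ w' ∈ W, w' ∈ Vis P g →
              (∀ gbar ∈ G, gbar ∉ Vis P w → gbar ≠ g → gbar ∉ Vis P w') →
              w' ∈ Vis P g')) := by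
  classical
  -- Feasible is nonempty
  have hFne : ∃ x, x ∈ Feasible P G W := by
    by_contra hne
    push_neg at hne
    have hFe : Feasible P G W = ∅ := Set.eq_empty_iff_forall_notMem.mpr hne
    rw [hFe, convexHull_empty, AffineSubspace.span_empty] at hfull
    exact AffineSubspace.notMem_bot ℝ (↥G → ℝ) 0 (hfull ▸ AffineSubspace.mem_top ℝ (↥G → ℝ) 0)
  obtain ⟨x0, hx0⟩ := hFne
  have hsee : ∀ w'' ∈ W, ∃ h : ↥G, (h : Pt) ∈ Vis P w'' :=
    fun w'' h => (hx0.2 w'' h).imp (fun g hg => hg.1)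
  obtain ⟨gw, hgwv, -⟩ := hx0.2 w hw
  -- validity of the witness inequality
  have hvalid0 : ∀ x ∈ Feasible P G W,
      (1:ℝ) ≤ ∑ g : ↥G, (if (g : Pt) ∈ Vis P w then (1:ℝ) else 0) * x g := by
    intro x hx
    obtain ⟨g, hgv, hg1⟩ := hx.2 w hw
    have hnn : ∀ h : ↥G, h ∈ Finset.univ →
        (0:ℝ) ≤ (if (h : Pt) ∈ Vis P w then (1:ℝ) else 0) * x h := by
      intro h _
      apply mul_nonneg
      · split_ifs <;> norm_num
      · rcases hx.1 h with h0 | h0 <;> rw [h0] <;> norm_num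
    calc (1:ℝ) = (if (g : Pt) ∈ Vis P w then (1:ℝ) else 0) * x g := by simp [hgv, hg1]
      _ ≤ _ := Finset.single_le_sum hnn (Finset.mem_univ g)
  constructor
  · intro hfacet
    have hdim' : Module.finrank ℝ (affineSpan ℝ (faceSet P G W w)).direction
        = G.card - 1 := hfacet.2
    constructor
    · -- condition (1)
      by_contra hcon
      obtain ⟨w', hw'W, hss⟩ := hcon
      obtain ⟨p0, hp0t, hp0n⟩ := Set.exists_of_ssubset hss
      have hp0G : p0 ∈ G := Finset.mem_coe.mp hp0t.2
      set g0 : ↥G := ⟨p0, hp0G⟩ with hg0def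
      have hp0w : (g0 : Pt) ∈ Vis P w := hp0t.1
      have hp0nw' : (g0 : Pt) ∉ Vis P w' := fun h => hp0n ⟨h, hp0t.2⟩
      obtain ⟨g1, hg1v'⟩ := hsee w' hw'W
      have hg1w : (g1 : Pt) ∈ Vis P w :=
        (hss.subset ⟨hg1v', Finset.mem_coe.mpr g1.2⟩).1
      have hne : g1 ≠ g0 := fun h => hp0nw' (h ▸ hg1v')
      have key : ∀ x ∈ Feasible P G W, (1:ℝ) ≤
          ∑ g : ↥G, ((if (g : Pt) ∈ Vis P w then (1:ℝ) else 0) - ef G g0 g) * x g := by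
        intro x hx
        obtain ⟨h', hh'v, hh'1⟩ := hx.2 w' hw'W
        have hh'w : (h' : Pt) ∈ Vis P w :=
          (hss.subset ⟨hh'v, Finset.mem_coe.mpr h'.2⟩).1
        have hh'ne : h' ≠ g0 := fun h => hp0nw' (h ▸ hh'v)
        have hnn : ∀ i : ↥G, i ∈ Finset.univ → (0:ℝ) ≤
            ((if (i : Pt) ∈ Vis P w then (1:ℝ) else 0) - ef G g0 i) * x i := by
          intro i _
          apply mul_nonneg
          · by_cases hi : i = g0
            · subst hi; simp [ef, hp0w]
            · simp only [ef, if_neg hi]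
              split_ifs <;> norm_num
          · rcases hx.1 i with h0 | h0 <;> rw [h0] <;> norm_num
        calc (1:ℝ) = ((if (h' : Pt) ∈ Vis P w then (1:ℝ) else 0) - ef G g0 h') * x h' := by
              simp [ef, hh'w, hh'ne, hh'1]
          _ ≤ _ := Finset.single_le_sum hnn (Finset.mem_univ h')
      have hface0 : ∀ x ∈ faceSet P G W w, x g0 = 0 := by
        intro x hx
        have h1 := hull_ge (F := Feasible P G W) key x hx.1
        rw [Finset.sum_congr rfl (fun i _ => sub_mul _ _ (x i)), Finset.sum_sub_distrib,
          hx.2, sum_ef_mul] at h1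
        have h2 := hull_coord_nonneg (P := P) (W := W) g0 x hx.1
        linarith
      exact (face_dim_contra hdim' g0 g1 hne hg1w 0 hface0).elim
    · -- condition (2)
      intro g hgG hgv
      by_contra hcon
      push_neg at hcon
      set gg : ↥G := ⟨g, hgG⟩ with hggdef
      have key2 : ∀ x ∈ Feasible P G W, (2:ℝ) ≤
          ∑ g' : ↥G, ((if (g' : Pt) ∈ Vis P w then (1:ℝ) else 0) + ef G gg g') * x g' := by
        intro x hx
        have hsplit : ∑ g' : ↥G, ((if (g' : Pt) ∈ Vis P w then (1:ℝ) else 0) + ef G gg g') * x g'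
            = (∑ g' : ↥G, (if (g' : Pt) ∈ Vis P w then (1:ℝ) else 0) * x g') + x gg := by
          rw [Finset.sum_congr rfl (fun i _ => add_mul _ _ (x i)), Finset.sum_add_distrib,
            sum_ef_mul]
        rw [hsplit]
        by_cases hxg : x gg = 1
        · have := hvalid0 x hx
          rw [hxg]; linarith
        · have hxg0 : x gg = 0 := (hx.1 gg).resolve_right hxg
          obtain ⟨s, hsv, hs1⟩ := hx.2 w hw
          obtain ⟨w', hw'W, hw'g, hbar, hns⟩ := hcon (s : Pt) s.2 hsv
          obtain ⟨h', hh'v, hh'1⟩ := hx.2 w' hw'W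
          have hh'w : (h' : Pt) ∈ Vis P w := by
            by_contra hh
            have hne' : (h' : Pt) ≠ g := by
              intro he
              have he2 : h' = gg := Subtype.ext he
              rw [he2, hxg0] at hh'1; norm_num at hh'1
            exact (hbar (h' : Pt) h'.2 hh hne') hh'v
          have hne2 : h' ≠ s := by
            intro he
            apply hns
            apply vis_symm
            rw [← he]; exact hh'v
          have hnn : ∀ i ∈ Finset.univ, i ∉ ({h', s} : Finset ↥G) →
              (0:ℝ) ≤ (if (i : Pt) ∈ Vis P w then (1:ℝ) else 0) * x i := by
            intro i _ _
            apply mul_nonneg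
            · split_ifs <;> norm_num
            · rcases hx.1 i with h0 | h0 <;> rw [h0] <;> norm_num
          have hp := Finset.sum_le_sum_of_subset_of_nonneg
            (Finset.subset_univ ({h', s} : Finset ↥G)) hnn
          rw [Finset.sum_pair hne2, if_pos hh'w, if_pos hsv, hh'1, hs1] at hp
          rw [hxg0]
          linarith
      have hface1 : ∀ x ∈ faceSet P G W w, x gg = 1 := by
        intro x hx
        have h1 := hull_ge (F := Feasible P G W) key2 x hx.1
        rw [Finset.sum_congr rfl (fun i _ => add_mul _ _ (x i)), Finset.sum_add_distrib,
          hx.2, sum_ef_mul] at h1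
        have h2 := hull_coord_le_one (P := P) (W := W) gg x hx.1
        linarith
      have hnegw : gw ≠ gg := by
        intro h
        apply hgv
        have : (gw : Pt) = g := by rw [h]
        rwa [this] at hgwv
      exact (face_dim_contra hdim' gg gw hnegw hgwv 1 hface1).elim
  · rintro ⟨cond1, cond2⟩
    refine ⟨fun x hx => hvalid0 x hx, ?_⟩
    show Module.finrank ℝ (affineSpan ℝ (faceSet P G W w)).direction = G.card - 1
    rw [direction_affineSpan]
    set A : ↥G → ℝ := fun g => if (g : Pt) ∈ Vis P w then (1:ℝ) else 0 with hA
    have hSA : ∀ g' : ↥G, (g' : Pt) ∈ Vis P w → pA P G w g' ∈ faceSet P G W w := by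
      intro g' hg'
      exact ⟨subset_convexHull ℝ _ (pA_feasible cond1 hg'), sum_pA hg'⟩
    have hupper : vectorSpan ℝ (faceSet P G W w) ≤ LinearMap.ker (lfun G A) := by
      rw [vectorSpan_def, Submodule.span_le]
      intro v hv
      rw [Set.mem_vsub] at hv
      obtain ⟨x, hx, y, hy, rfl⟩ := hv
      rw [SetLike.mem_coe, LinearMap.mem_ker, vsub_eq_sub, map_sub]
      have h1 : lfun G A x = 1 := hx.2
      have h2 : lfun G A y = 1 := hy.2
      rw [h1, h2, sub_self]
    have hlower : LinearMap.ker (lfun G A) ≤ vectorSpan ℝ (faceSet P G W w) := by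
      intro v hv
      rw [LinearMap.mem_ker, lfun_apply] at hv
      have hu : ∀ g : ↥G, (if (g : Pt) ∈ Vis P w then ef G g - ef G gw else ef G g)
          ∈ vectorSpan ℝ (faceSet P G W w) := by
        intro g
        by_cases hg : (g : Pt) ∈ Vis P w
        · rw [if_pos hg, ← pA_sub_pA hg hgwv, ← vsub_eq_sub]
          exact vsub_mem_vectorSpan ℝ (hSA g hg) (hSA gw hgwv)
        · rw [if_neg hg]
          obtain ⟨s', hs'G, hs'v, hprop⟩ := cond2 (g : Pt) g.2 hg
          have hBmem : pB P G w g ⟨s', hs'G⟩ ∈ faceSet P G W w :=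
            ⟨subset_convexHull ℝ _ (pB_feasible cond1 hg hs'v hprop), sum_pB hg hs'v⟩
          rw [← pA_sub_pB hg (s := ⟨s', hs'G⟩) hs'v, ← vsub_eq_sub]
          exact vsub_mem_vectorSpan ℝ (hSA _ hs'v) hBmem
      have hrepr : v = ∑ g : ↥G,
          v g • (if (g : Pt) ∈ Vis P w then ef G g - ef G gw else ef G g) := by
        funext h
        rw [Finset.sum_apply]
        have hterm : ∀ g : ↥G,
            (v g • (if (g : Pt) ∈ Vis P w then ef G g - ef G gw else ef G g)) h
            = v g * ef G g h - A g * (v g * ef G gw h) := by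
          intro g
          by_cases hg : (g : Pt) ∈ Vis P w
          · rw [if_pos hg, hA]
            simp only [if_pos hg, Pi.smul_apply, Pi.sub_apply, smul_eq_mul]
            ring
          · rw [if_neg hg, hA]
            simp only [if_neg hg, Pi.smul_apply, smul_eq_mul]
            ring
        rw [Finset.sum_congr rfl fun g _ => hterm g, Finset.sum_sub_distrib]
        have e1 : ∑ g : ↥G, v g * ef G g h = v h := by
          have h1 : ∀ g : ↥G, v g * ef G g h = if h = g then v g else 0 := by
            intro g; by_cases hh : h = g
            · subst hh; simp [ef]
            · simp [ef, hh]
          rw [Finset.sum_congr rfl fun g _ => h1 g, Finset.sum_ite_eq Finset.univ h v]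
          simp
        have e2 : ∑ g : ↥G, A g * (v g * ef G gw h) = 0 := by
          have h1 : ∀ g : ↥G, A g * (v g * ef G gw h) = ef G gw h * (A g * v g) := by
            intro g; ring
          rw [Finset.sum_congr rfl fun g _ => h1 g, ← Finset.mul_sum, hv, mul_zero]
        rw [e1, e2, sub_zero]
      rw [hrepr]
      exact Submodule.sum_mem _ fun g _ => Submodule.smul_mem _ _ (hu g)
    rw [le_antisymm hupper hlower]
    apply finrank_ker_one
    intro c
    refine ⟨c • ef G gw, ?_⟩
    rw [map_smul, lfun_ef, hA]
    simp [hgwv]
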